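/- For every R > 0 there exists a constant C_R > 0 such that for every λ > 0 and every nonzero k ∈ ℝ³, ∫_{{u ∈ ℝ³ : |u| ≤ 2R}} (λ² + (u·k)²)^{-2} du ≤ C_R λ^{-16/5} |k|^{-4/5}. -/

import Mathlib

open Real MeasureTheory Set

noncomputable section

lemma aux1d {c : ℝ} (hc : 0 < c) :
    IntegrableOn (fun t : ℝ => |t| ^ (-(4:ℝ)/5)) (Set.Icc (-c) c) := by
  have hpos : IntegrableOn (fun t : ℝ => |t| ^ (-(4:ℝ)/5)) (Set.Icc 0 c) := by
    have h1 : IntervalIntegrable (fun x : ℝ => x ^ (-(4:ℝ)/5)) volume 0 c :=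
      intervalIntegral.intervalIntegrable_rpow' (by norm_num)
    rw [intervalIntegrable_iff, Set.uIoc_of_le hc.le] at h1
    have h2 : IntegrableOn (fun t : ℝ => |t| ^ (-(4:ℝ)/5)) (Set.Ioc 0 c) :=
      h1.congr_fun (fun x hx => by rw [abs_of_pos hx.1]) measurableSet_Ioc
    rw [IntegrableOn, ← Measure.restrict_congr_set Ioc_ae_eq_Icc]
    exact h2
  have hneg : IntegrableOn (fun t : ℝ => |t| ^ (-(4:ℝ)/5)) (Set.Icc (-c) 0) := by
    have hmp : MeasurePreserving (fun t : ℝ => -t) volume volume :=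
      Measure.measurePreserving_neg volume
    have hemb : MeasurableEmbedding (fun t : ℝ => -t) :=
      (Homeomorph.neg ℝ).measurableEmbedding
    have hset : (fun t : ℝ => -t) ⁻¹' (Set.Icc (-c) 0) = Set.Icc 0 c := by
      ext x
      simp only [Set.mem_preimage, Set.mem_Icc]
      constructor <;> intro h <;> constructor <;> linarith [h.1, h.2]
    have hfun : ((fun t : ℝ => |t| ^ (-(4:ℝ)/5)) ∘ (fun t : ℝ => -t))
        = fun t : ℝ => |t| ^ (-(4:ℝ)/5) := by
      funext t; simp [Function.comp, abs_neg]
    have := (hmp.integrableOn_comp_preimage hemb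
      (f := fun t : ℝ => |t| ^ (-(4:ℝ)/5)) (s := Set.Icc (-c) 0))
    rw [hset, hfun] at this
    exact this.mp hpos
  have hu : Set.Icc (-c) 0 ∪ Set.Icc 0 c = Set.Icc (-c) c :=
    Set.Icc_union_Icc_eq_Icc (by linarith) hc.le
  rw [← hu]
  exact hneg.union hpos

lemma coord_le_norm (u : EuclideanSpace ℝ (Fin 3)) (i : Fin 3) : |u i| ≤ ‖u‖ := by
  have h := abs_real_inner_le_norm (EuclideanSpace.single i (1:ℝ)) u
  simpa [EuclideanSpace.inner_single_left] using h

lemma auxA {R : ℝ} (hR : 0 < R) :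
    IntegrableOn (fun u : EuclideanSpace ℝ (Fin 3) => |u 0| ^ (-(4:ℝ)/5))
      {u : EuclideanSpace ℝ (Fin 3) | ‖u‖ ≤ 2 * R} := by
  have hc : (0:ℝ) < 2 * R := by linarith
  set s : Set ℝ := Set.Icc (-(2*R)) (2*R) with hs
  set f : Fin 3 → ℝ → ℝ :=
    fun i => Set.indicator s (fun t => if i = 0 then |t| ^ (-(4:ℝ)/5) else 1) with hf_def
  have hf : ∀ i, Integrable (f i) := by
    intro i
    rw [hf_def]
    rw [integrable_indicator_iff measurableSet_Icc]
    by_cases hi : i = 0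
    · simpa [hi] using aux1d hc
    · simp only [hi, if_false]
      exact integrableOn_const measure_Icc_lt_top.ne
  have hprod := MeasureTheory.Integrable.fintype_prod (𝕜 := ℝ) hf
  have hind : (fun x : Fin 3 → ℝ => ∏ i, f i (x i))
      = Set.indicator (Set.univ.pi fun _ : Fin 3 => s)
          (fun x : Fin 3 → ℝ => |x 0| ^ (-(4:ℝ)/5)) := by
    funext x
    by_cases hx : x ∈ Set.univ.pi fun _ : Fin 3 => s
    · rw [Set.indicator_of_mem hx]
      have hxi : ∀ i, x i ∈ s := fun i => hx i (Set.mem_univ i)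
      rw [Fin.prod_univ_three]
      simp [hf_def, Set.indicator_of_mem (hxi 0), Set.indicator_of_mem (hxi 1),
        Set.indicator_of_mem (hxi 2)]
    · rw [Set.indicator_of_notMem hx]
      rw [Set.mem_univ_pi] at hx
      push_neg at hx
      obtain ⟨i, hi⟩ := hx
      exact Finset.prod_eq_zero (Finset.mem_univ i)
        (by simp [hf_def, Set.indicator_of_notMem hi])
  rw [hind, integrable_indicator_iff (MeasurableSet.univ_pi fun _ => measurableSet_Icc)] at hprod
  have hmp := EuclideanSpace.volume_preserving_symm_measurableEquiv_toLp (Fin 3)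
  have hemb := (MeasurableEquiv.toLp 2 (Fin 3 → ℝ)).symm.measurableEmbedding
  have h2 := (hmp.integrableOn_comp_preimage hemb).mpr hprod
  have h3 : IntegrableOn (fun u : EuclideanSpace ℝ (Fin 3) => |u 0| ^ (-(4:ℝ)/5))
      ((MeasurableEquiv.toLp 2 (Fin 3 → ℝ)).symm ⁻¹' (Set.univ.pi fun _ : Fin 3 => s)) := h2
  refine h3.mono_set ?_
  intro u hu
  simp only [Set.mem_preimage, Set.mem_univ_pi]
  intro i
  have h4 : |u i| ≤ 2 * R := le_trans (coord_le_norm u i) hu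
  have : (MeasurableEquiv.toLp 2 (Fin 3 → ℝ)).symm u i = u i := rfl
  rw [this, hs, Set.mem_Icc]
  exact abs_le.mp h4

lemma auxB {R : ℝ} (hR : 0 < R) {ν : EuclideanSpace ℝ (Fin 3)} (hν : ‖ν‖ = 1) :
    IntegrableOn (fun u : EuclideanSpace ℝ (Fin 3) => |(inner ℝ u ν : ℝ)| ^ (-(4:ℝ)/5))
      {u : EuclideanSpace ℝ (Fin 3) | ‖u‖ ≤ 2 * R}
    ∧ (∫ u in {u : EuclideanSpace ℝ (Fin 3) | ‖u‖ ≤ 2 * R}, |(inner ℝ u ν : ℝ)| ^ (-(4:ℝ)/5))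
      = ∫ u in {u : EuclideanSpace ℝ (Fin 3) | ‖u‖ ≤ 2 * R}, |u 0| ^ (-(4:ℝ)/5) := by
  set S : Set (EuclideanSpace ℝ (Fin 3)) := {u : EuclideanSpace ℝ (Fin 3) | ‖u‖ ≤ 2 * R} with hS
  set e0 : EuclideanSpace ℝ (Fin 3) := EuclideanSpace.single (0 : Fin 3) (1:ℝ) with he0
  have hnorm : ‖e0‖ = ‖ν‖ := by rw [hν, he0, EuclideanSpace.norm_single]; norm_num
  set T : EuclideanSpace ℝ (Fin 3) ≃ₗᵢ[ℝ] EuclideanSpace ℝ (Fin 3) := Submodule.reflection (ℝ ∙ (e0 - ν))ᗮ with hT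
  have hT0 : T e0 = ν := Submodule.reflection_sub hnorm
  have hTmp : MeasurePreserving T := T.measurePreserving
  have hTemb : MeasurableEmbedding T := T.toHomeomorph.measurableEmbedding
  have hTS : T ⁻¹' S = S := by
    ext u
    simp [hS, T.norm_map]
  have hinner : ∀ u : EuclideanSpace ℝ (Fin 3), (inner ℝ (T u) ν : ℝ) = u 0 := by
    intro u
    rw [← hT0, LinearIsometryEquiv.inner_map_map, he0]
    simp [EuclideanSpace.inner_single_right]
  have hfun : ((fun y : EuclideanSpace ℝ (Fin 3) => |(inner ℝ y ν : ℝ)| ^ (-(4:ℝ)/5)) ∘ T)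
      = fun u : EuclideanSpace ℝ (Fin 3) => |u 0| ^ (-(4:ℝ)/5) := by
    funext u
    simp only [Function.comp_apply, hinner u]
  constructor
  · have h1 : IntegrableOn ((fun y : EuclideanSpace ℝ (Fin 3) => |(inner ℝ y ν : ℝ)| ^ (-(4:ℝ)/5)) ∘ T) (T ⁻¹' S) := by
      rw [hTS, hfun]; exact auxA hR
    exact (hTmp.integrableOn_comp_preimage hTemb).mp h1
  · have h2 := hTmp.setIntegral_preimage_emb hTemb
      (fun y : EuclideanSpace ℝ (Fin 3) => |(inner ℝ y ν : ℝ)| ^ (-(4:ℝ)/5)) S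
    rw [hTS] at h2
    rw [← h2]
    have h3 : (fun x : EuclideanSpace ℝ (Fin 3) => |(inner ℝ (T x) ν : ℝ)| ^ (-(4:ℝ)/5))
        = fun x : EuclideanSpace ℝ (Fin 3) => |x 0| ^ (-(4:ℝ)/5) := funext fun u => by rw [hinner]
    simp_rw [h3]

lemma auxPoint {lam b nk c : ℝ} (hlam : 0 < lam) (hb : b ≠ 0) (hnk : 0 < nk)
    (hc : b = nk * c) :
    ((lam^2 + b^2)^2)⁻¹ ≤ lam ^ (-(16:ℝ)/5) * nk ^ (-(4:ℝ)/5) * |c| ^ (-(4:ℝ)/5) := by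
  have ha : (0:ℝ) < lam^2 := by positivity
  have hb2 : (0:ℝ) < b^2 := by positivity
  have hAM : (lam^2) ^ ((4:ℝ)/5) * (b^2) ^ ((1:ℝ)/5) ≤ lam^2 + b^2 := by
    have h := Real.geom_mean_le_arith_mean2_weighted (by norm_num : (0:ℝ) ≤ 4/5)
      (by norm_num : (0:ℝ) ≤ 1/5) ha.le hb2.le (by norm_num)
    nlinarith [ha.le, hb2.le]
  have hsq : (lam^2) ^ ((8:ℝ)/5) * (b^2) ^ ((2:ℝ)/5) ≤ (lam^2 + b^2)^2 := by
    calc (lam^2) ^ ((8:ℝ)/5) * (b^2) ^ ((2:ℝ)/5)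
        = ((lam^2) ^ ((4:ℝ)/5) * (b^2) ^ ((1:ℝ)/5))^2 := by
          rw [mul_pow, ← Real.rpow_natCast ((lam^2) ^ ((4:ℝ)/5)) 2,
            ← Real.rpow_natCast ((b^2) ^ ((1:ℝ)/5)) 2,
            ← Real.rpow_mul ha.le, ← Real.rpow_mul hb2.le]
          norm_num
      _ ≤ (lam^2 + b^2)^2 := pow_le_pow_left₀ (by positivity) hAM 2
  have hl : ((lam^2:ℝ) ^ ((8:ℝ)/5))⁻¹ = lam ^ (-(16:ℝ)/5) := by
    rw [← Real.rpow_natCast lam 2, ← Real.rpow_mul hlam.le,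
      show (-(16:ℝ)/5) = -((16:ℝ)/5) by norm_num, Real.rpow_neg hlam.le]
    norm_num
  have habs : |b| = nk * |c| := by rw [hc, abs_mul, abs_of_pos hnk]
  have hbr : (b^2:ℝ) ^ ((2:ℝ)/5) = (nk * |c|) ^ ((4:ℝ)/5) := by
    rw [← sq_abs, ← Real.rpow_natCast |b| 2, ← Real.rpow_mul (abs_nonneg b), habs]
    norm_num
  have hr : ((b^2:ℝ) ^ ((2:ℝ)/5))⁻¹ = nk ^ (-(4:ℝ)/5) * |c| ^ (-(4:ℝ)/5) := by
    rw [hbr, Real.mul_rpow hnk.le (abs_nonneg c), mul_inv,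
      show (-(4:ℝ)/5) = -((4:ℝ)/5) by norm_num, Real.rpow_neg hnk.le,
      Real.rpow_neg (abs_nonneg c)]
  calc ((lam^2 + b^2)^2)⁻¹
      ≤ ((lam^2) ^ ((8:ℝ)/5) * (b^2) ^ ((2:ℝ)/5))⁻¹ := by
        apply inv_anti₀ (by positivity) hsq
    _ = lam ^ (-(16:ℝ)/5) * (nk ^ (-(4:ℝ)/5) * |c| ^ (-(4:ℝ)/5)) := by
        rw [mul_inv, hl, hr]
    _ = lam ^ (-(16:ℝ)/5) * nk ^ (-(4:ℝ)/5) * |c| ^ (-(4:ℝ)/5) := by ring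


/-- `∫_{|u|≤2R} (λ² + (u·k)²)⁻² du ≤ C_R λ^{-16/5}|k|^{-4/5}`. -/
theorem stmt15 (R : ℝ) (hR : 0 < R) :
    ∃ C : ℝ, 0 < C ∧ ∀ lam : ℝ, 0 < lam →
      ∀ k : EuclideanSpace ℝ (Fin 3), k ≠ 0 →
        (∫ u in {u : EuclideanSpace ℝ (Fin 3) | ‖u‖ ≤ 2 * R},
            ((lam^2 + (inner ℝ u k : ℝ)^2)^2)⁻¹)
          ≤ C * lam ^ (-(16:ℝ)/5) * ‖k‖ ^ (-(4:ℝ)/5) := by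
  set S : Set (EuclideanSpace ℝ (Fin 3)) := {u : EuclideanSpace ℝ (Fin 3) | ‖u‖ ≤ 2 * R} with hS
  set I : ℝ := ∫ u in S, |u 0| ^ (-(4:ℝ)/5) with hI
  have hI0 : 0 ≤ I := integral_nonneg fun u => Real.rpow_nonneg (abs_nonneg _) _
  refine ⟨I + 1, by linarith, ?_⟩
  intro lam hlam k hk
  set ν : EuclideanSpace ℝ (Fin 3) := (‖k‖⁻¹ : ℝ) • k with hν_def
  have hν : ‖ν‖ = 1 := norm_smul_inv_norm (𝕜 := ℝ) hk
  obtain ⟨hBint, hBeq⟩ := auxB hR hν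
  have hknorm : (0:ℝ) < ‖k‖ := norm_pos_iff.mpr hk
  have hbc : ∀ u : EuclideanSpace ℝ (Fin 3), (inner ℝ u k : ℝ) = ‖k‖ * (inner ℝ u ν : ℝ) := by
    intro u
    rw [hν_def, real_inner_smul_right]
    field_simp
  have hker : volume {u : EuclideanSpace ℝ (Fin 3) | (inner ℝ u k : ℝ) = 0} = 0 := by
    have hset : {u : EuclideanSpace ℝ (Fin 3) | (inner ℝ u k : ℝ) = 0}
        = ((ℝ ∙ k)ᗮ : Submodule ℝ (EuclideanSpace ℝ (Fin 3))) := by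
      ext u
      simp [Submodule.mem_orthogonal_singleton_iff_inner_left]
    rw [hset]
    refine Measure.addHaar_submodule volume _ ?_
    intro htop
    apply hk
    have hkmem : k ∈ (ℝ ∙ k)ᗮ := by rw [htop]; trivial
    rw [Submodule.mem_orthogonal_singleton_iff_inner_left] at hkmem
    exact inner_self_eq_zero.mp hkmem
  have hae : ∀ᵐ u ∂(volume.restrict S), (inner ℝ u k : ℝ) ≠ 0 := by
    refine ae_restrict_of_ae ?_
    rw [ae_iff]
    simpa using hker
  have hmono := integral_mono_of_nonneg
      (f := fun u : EuclideanSpace ℝ (Fin 3) => ((lam^2 + (inner ℝ u k : ℝ)^2)^2)⁻¹)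
      (g := fun u : EuclideanSpace ℝ (Fin 3) =>
        (lam ^ (-(16:ℝ)/5) * ‖k‖ ^ (-(4:ℝ)/5)) * |(inner ℝ u ν : ℝ)| ^ (-(4:ℝ)/5))
      (μ := volume.restrict S)
      (Filter.Eventually.of_forall fun u => by positivity)
      (hBint.const_mul _)
      (hae.mono fun u hu => by
        have h := auxPoint hlam hu hknorm (hbc u)
        simpa [mul_assoc] using h)
  rw [MeasureTheory.integral_const_mul] at hmono
  have hA : 0 < lam ^ (-(16:ℝ)/5) := Real.rpow_pos_of_pos hlam _
  have hB : 0 < ‖k‖ ^ (-(4:ℝ)/5) := Real.rpow_pos_of_pos hknorm _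
  refine le_trans hmono ?_
  rw [hBeq, ← hI]
  nlinarith [mul_pos hA hB, hI0]
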